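/- Let 0 < μ < 1 and define f(λ) = ((1−μ)/μ)·(μ + λ²)/(1 + λ)² for λ ∈ [0, μ]. Then f is strictly decreasing on [0, μ]: for all 0 ≤ λ₁ < λ₂ ≤ μ one has f(λ₂) < f(λ₁). Moreover f(0) = 1 − μ and f(μ) = (1−μ)/(1+μ); in particular (1−μ)/(1+μ) < 1 − μ. -/

import Mathlib

/-- For `0 < μ < 1`, the function `f(λ) = ((1−μ)/μ)·(μ + λ²)/(1 + λ)²` is strictly
decreasing on `[0, μ]`, with `f(0) = 1 − μ` and `f(μ) = (1−μ)/(1+μ)`;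
in particular `(1−μ)/(1+μ) < 1 − μ`. -/
theorem extremal_value_strictly_smaller (μ : ℝ) (h0 : 0 < μ) (h1 : μ < 1) :
    (∀ l₁ l₂ : ℝ, 0 ≤ l₁ → l₁ < l₂ → l₂ ≤ μ →
      ((1 - μ) / μ) * (μ + l₂ ^ 2) / (1 + l₂) ^ 2 <
        ((1 - μ) / μ) * (μ + l₁ ^ 2) / (1 + l₁) ^ 2) ∧
    ((1 - μ) / μ) * (μ + (0 : ℝ) ^ 2) / (1 + (0 : ℝ)) ^ 2 = 1 - μ ∧
    ((1 - μ) / μ) * (μ + μ ^ 2) / (1 + μ) ^ 2 = (1 - μ) / (1 + μ) ∧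
    (1 - μ) / (1 + μ) < 1 - μ := by
  have hμ : μ ≠ 0 := ne_of_gt h0
  have h1μ : (0:ℝ) < 1 + μ := by linarith
  refine ⟨?_, ?_, ?_, ?_⟩
  · intro l₁ l₂ h₁ h₁₂ h₂
    have hp1 : (0:ℝ) < (1 + l₁) ^ 2 := pow_pos (by linarith) 2
    have hp2 : (0:ℝ) < (1 + l₂) ^ 2 := pow_pos (by linarith) 2
    have hc : (0:ℝ) < (1 - μ) / μ := div_pos (by linarith) h0
    rw [div_lt_div_iff₀ hp2 hp1, mul_assoc, mul_assoc, mul_lt_mul_iff_right₀ hc]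
    have ha : (0:ℝ) < l₂ - l₁ := sub_pos.2 h₁₂
    nlinarith [mul_pos ha (show (0:ℝ) < (1 + μ) * (μ - l₁) by nlinarith),
      mul_nonneg ha.le (mul_nonneg h₁ (sub_nonneg.2 h₂)),
      mul_nonneg ha.le (mul_nonneg (show (0:ℝ) ≤ 1 - μ by linarith) (sub_nonneg.2 h₂))]
  · field_simp; ring
  · field_simp
  · rw [div_lt_iff₀ h1μ]; nlinarith
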